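/- Let A_{ij} ∈ ℝ[y^1,…,y^N] (1 ≤ i,j ≤ N) be polynomials satisfying A_{ij} = −A_{ji} and the cocycle condition δ_i A_{jk} + δ_j A_{ki} + δ_k A_{ij} = 0 for all i, j, k. Then there exist polynomials C_1,…,C_N ∈ ℝ[y^1,…,y^N] such that A_{ij} = δ_i C_j − δ_j C_i for all i, j. (This is the paper's Lemma, a generalization of the Poincaré lemma, which reduces to the standard algebraic Poincaré lemma when K is the identity matrix.) -/

import Mathlib

/-!
Context: `K` an invertible real `N×N` matrix, and `δ_i = K_i^m ∂/∂y^m` acting on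
`ℝ[y^1,…,y^N]`.

STATEMENT 6 (generalized Poincaré lemma): if `A_{ij} = −A_{ji}` and
`δ_i A_{jk} + δ_j A_{ki} + δ_k A_{ij} = 0`, then there exist `C_1,…,C_N` with
`A_{ij} = δ_i C_j − δ_j C_i`.
-/

open scoped BigOperators

/-- The operator `δ_i = K_i^m ∂/∂y^m` on `ℝ[y^1,…,y^N]`. -/
noncomputable def delK {N : ℕ} (K : Matrix (Fin N) (Fin N) ℝ) (i : Fin N)
    (f : MvPolynomial (Fin N) ℝ) : MvPolynomial (Fin N) ℝ :=
  ∑ m, MvPolynomial.C (K i m) * MvPolynomial.pderiv m f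


open MvPolynomial


noncomputable def Tk {N : ℕ} (k : ℕ) : MvPolynomial (Fin N) ℝ →ₗ[ℝ] MvPolynomial (Fin N) ℝ :=
  ((Finsupp.lsum ℝ) fun s => ((((∑ a, s a : ℕ) : ℝ) + k)⁻¹) • (MvPolynomial.monomial s)) ∘ₗ
    (AddMonoidAlgebra.coeffLinearEquiv ℝ).toLinearMap

lemma Tk_monomial {N : ℕ} (k : ℕ) (s : Fin N →₀ ℕ) (r : ℝ) :
    Tk k (monomial s r) = monomial s (((((∑ a, s a : ℕ) : ℝ) + k)⁻¹) * r) := by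
  show (Finsupp.lsum ℝ) _ ((AddMonoidAlgebra.coeffLinearEquiv ℝ) (monomial s r)) = _
  rw [show (AddMonoidAlgebra.coeffLinearEquiv ℝ) (monomial s r) = Finsupp.single s r from rfl]
  rw [Finsupp.lsum_single]
  simp [smul_monomial]

lemma deg_sub_single {N : ℕ} (s : Fin N →₀ ℕ) (b : Fin N) (h : 1 ≤ s b) :
    (∑ a, (s - Finsupp.single b 1 : Fin N →₀ ℕ) a) = (∑ a, s a) - 1 := by
  simp only [Finsupp.tsub_apply]
  have hle : ∀ x ∈ Finset.univ, (Finsupp.single b 1 : Fin N →₀ ℕ) x ≤ s x := by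
    intro a _
    rcases eq_or_ne b a with rfl | hba
    · simpa [Finsupp.single_apply] using h
    · simp [Finsupp.single_apply, hba]
  rw [Finset.sum_tsub_distrib _ hle]
  congr 1
  simp [Finsupp.single_apply]

lemma pderiv_Tk {N : ℕ} (b : Fin N) (f : MvPolynomial (Fin N) ℝ) :
    pderiv b (Tk 2 f) = Tk 3 (pderiv b f) := by
  induction f using MvPolynomial.induction_on' with
  | monomial s r =>
    rw [Tk_monomial, pderiv_monomial, pderiv_monomial, Tk_monomial]
    by_cases h : 1 ≤ s b
    · rw [deg_sub_single s b h]
      have hd : 1 ≤ ∑ a, s a := le_trans h (Finset.single_le_sum (f := fun a => s a) (fun _ _ => Nat.zero_le _) (Finset.mem_univ b))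
      congr 1
      push_cast [hd]
      ring
    · have : s b = 0 := by omega
      simp [this]
  | add p q hp hq => simp [map_add, hp, hq]

lemma euler_Tk {N : ℕ} (f : MvPolynomial (Fin N) ℝ) :
    ∑ a, X a * Tk 3 (pderiv a f) = f - (2:ℝ) • Tk 2 f := by
  induction f using MvPolynomial.induction_on' with
  | monomial s r =>
    have key : ∀ a : Fin N, X a * Tk 3 (pderiv a (monomial s r))
        = ((s a : ℝ) * (((∑ a, s a : ℕ) : ℝ) + 2)⁻¹) • monomial s r := by
      intro a
      rw [pderiv_monomial, Tk_monomial]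
      by_cases h : 1 ≤ s a
      · rw [deg_sub_single s a h]
        have hd : 1 ≤ ∑ c, s c := le_trans h (Finset.single_le_sum (f := fun c => s c) (fun _ _ => Nat.zero_le _) (Finset.mem_univ a))
        rw [X, monomial_mul]
        have hs : Finsupp.single a 1 + (s - Finsupp.single a 1) = s := by
          ext c
          by_cases hc : c = a
          · subst hc
            simp [Finsupp.single_apply]
            omega
          · simp [Finsupp.add_apply, Finsupp.tsub_apply, Finsupp.single_apply, Ne.symm hc, hc]
        rw [hs, one_mul, smul_monomial]
        congr 1
        have hpos : (2:ℝ) + ∑ x, ((s x : ℕ) : ℝ) ≠ 0 := by positivity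
        push_cast [hd]
        rw [show (∑ x : Fin N, ((s x : ℕ):ℝ)) - 1 + 3 = (∑ x : Fin N, ((s x : ℕ):ℝ)) + 2 from by ring, smul_eq_mul]
        ring
      · have : s a = 0 := by omega
        simp [this]
    rw [Finset.sum_congr rfl (fun a _ => key a), ← Finset.sum_smul, ← Finset.sum_mul,
      Tk_monomial, smul_monomial, smul_monomial, ← map_sub, ← Nat.cast_sum]
    have hpos : ((∑ a, s a : ℕ) : ℝ) + 2 ≠ 0 := by positivity
    congr 1
    push_cast
    have hpos' : (2:ℝ) + ∑ x, ((s x : ℕ) : ℝ) ≠ 0 := by positivity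
    generalize (∑ x, ((s x : ℕ) : ℝ)) = S at hpos' ⊢
    linear_combination r * mul_inv_cancel₀ hpos'
  | add p q hp hq =>
    simp only [map_add, mul_add, Finset.sum_add_distrib, hp, hq, smul_add]
    abel

lemma rot1 {N : ℕ} (F : Fin N → Fin N → Fin N → MvPolynomial (Fin N) ℝ) :
    ∑ x, ∑ y, ∑ z, F x y z = ∑ x, ∑ y, ∑ z, F z x y := by
  rw [Finset.sum_comm]
  exact Finset.sum_congr rfl fun y _ => Finset.sum_comm

lemma rot2 {N : ℕ} (F : Fin N → Fin N → Fin N → MvPolynomial (Fin N) ℝ) :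
    ∑ x, ∑ y, ∑ z, F x y z = ∑ x, ∑ y, ∑ z, F y z x :=
  (rot1 F).trans (rot1 fun x y z => F z x y)

lemma contract {N : ℕ} (M M' : Matrix (Fin N) (Fin N) ℝ) (h : M * M' = 1) (i : Fin N)
    (g : Fin N → MvPolynomial (Fin N) ℝ) :
    ∑ b, MvPolynomial.C (M i b) * (∑ l, MvPolynomial.C (M' b l) * g l) = g i := by
  calc ∑ b, MvPolynomial.C (M i b) * (∑ l, MvPolynomial.C (M' b l) * g l)
      = ∑ b, ∑ l, MvPolynomial.C (M i b * M' b l) * g l := by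
        refine Finset.sum_congr rfl fun b _ => ?_
        rw [Finset.mul_sum]
        exact Finset.sum_congr rfl fun l _ => by rw [map_mul]; ring
    _ = ∑ l, ∑ b, MvPolynomial.C (M i b * M' b l) * g l := Finset.sum_comm
    _ = ∑ l, MvPolynomial.C ((M * M') i l) * g l := by
        refine Finset.sum_congr rfl fun l _ => ?_
        rw [← Finset.sum_mul, ← map_sum, Matrix.mul_apply]
    _ = g i := by
        rw [h]
        simp [Matrix.one_apply, apply_ite MvPolynomial.C]
theorem generalized_poincare_lemma
    (N : ℕ) (hN : 1 ≤ N) (K K' : Matrix (Fin N) (Fin N) ℝ)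
    (hKK' : K * K' = 1) (hK'K : K' * K = 1)
    (A : Fin N → Fin N → MvPolynomial (Fin N) ℝ)
    (hA_anti : ∀ i j, A i j = - A j i)
    (hA_cocycle : ∀ i j k,
      delK K i (A j k) + delK K j (A k i) + delK K k (A i j) = 0) :
    ∃ C : Fin N → MvPolynomial (Fin N) ℝ,
      ∀ i j, A i j = delK K i (C j) - delK K j (C i) := by
  classical
  have hdelK_Cmul : ∀ (i : Fin N) (r : ℝ) (f : MvPolynomial (Fin N) ℝ),
      delK K i (MvPolynomial.C r * f) = MvPolynomial.C r * delK K i f := by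
    intro i r f
    simp only [delK, pderiv_C_mul, Finset.mul_sum]
    exact Finset.sum_congr rfl fun m _ => by ring
  have hdelK_sum : ∀ (i : Fin N) (g : Fin N → MvPolynomial (Fin N) ℝ),
      delK K i (∑ c, g c) = ∑ c, delK K i (g c) := by
    intro i g
    simp only [delK, map_sum, Finset.mul_sum]
    exact Finset.sum_comm
  have hpd : ∀ (m : Fin N) (f : MvPolynomial (Fin N) ℝ),
      pderiv m f = ∑ i, MvPolynomial.C (K' m i) * delK K i f := by
    intro m f
    simp only [delK]
    exact (contract K' K hK'K m fun l => pderiv l f).symm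
  set B : Fin N → Fin N → MvPolynomial (Fin N) ℝ :=
    fun b c => ∑ i, MvPolynomial.C (K' b i) * (∑ j, MvPolynomial.C (K' c j) * A i j)
    with hBdef
  have hB_anti : ∀ b c, B b c = - B c b := by
    intro b c
    calc B b c = ∑ i, ∑ j, MvPolynomial.C (K' b i) * (MvPolynomial.C (K' c j) * A i j) := by
          simp only [hBdef, Finset.mul_sum]
      _ = ∑ i, ∑ j, MvPolynomial.C (K' b j) * (MvPolynomial.C (K' c i) * A j i) :=
          Finset.sum_comm
      _ = ∑ i, ∑ j, -(MvPolynomial.C (K' c i) * (MvPolynomial.C (K' b j) * A i j)) := by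
          refine Finset.sum_congr rfl fun i _ => Finset.sum_congr rfl fun j _ => ?_
          rw [hA_anti j i]; ring
      _ = - B c b := by
          simp only [hBdef, Finset.mul_sum, Finset.sum_neg_distrib]
  have hpdB : ∀ a b c, pderiv a (B b c) = ∑ l, ∑ i, ∑ j,
      MvPolynomial.C (K' b i) * (MvPolynomial.C (K' c j) * (MvPolynomial.C (K' a l) * delK K l (A i j))) := by
    intro a b c
    calc pderiv a (B b c)
        = ∑ i, ∑ j, MvPolynomial.C (K' b i) * (MvPolynomial.C (K' c j) * pderiv a (A i j)) := by
          simp only [hBdef, Finset.mul_sum, map_sum, pderiv_C_mul]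
      _ = ∑ i, ∑ j, ∑ l, MvPolynomial.C (K' b i) * (MvPolynomial.C (K' c j) * (MvPolynomial.C (K' a l) * delK K l (A i j))) := by
          refine Finset.sum_congr rfl fun i _ => Finset.sum_congr rfl fun j _ => ?_
          rw [hpd a (A i j), Finset.mul_sum, Finset.mul_sum]
      _ = ∑ l, ∑ i, ∑ j, MvPolynomial.C (K' b i) * (MvPolynomial.C (K' c j) * (MvPolynomial.C (K' a l) * delK K l (A i j))) :=
          rot2 fun i j l => MvPolynomial.C (K' b i) * (MvPolynomial.C (K' c j) * (MvPolynomial.C (K' a l) * delK K l (A i j)))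
  have hcoc : ∀ a b c : Fin N,
      pderiv a (B b c) + pderiv b (B c a) + pderiv c (B a b) = 0 := by
    intro a b c
    have e2 : pderiv b (B c a) = ∑ l, ∑ i, ∑ j,
        MvPolynomial.C (K' c j) * (MvPolynomial.C (K' a l) * (MvPolynomial.C (K' b i) * delK K i (A j l))) :=
      (hpdB b c a).trans (rot2 fun l i j =>
        MvPolynomial.C (K' c i) * (MvPolynomial.C (K' a j) * (MvPolynomial.C (K' b l) * delK K l (A i j))))
    have e3 : pderiv c (B a b) = ∑ l, ∑ i, ∑ j,
        MvPolynomial.C (K' a l) * (MvPolynomial.C (K' b i) * (MvPolynomial.C (K' c j) * delK K j (A l i))) :=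
      (hpdB c a b).trans (rot1 fun l i j =>
        MvPolynomial.C (K' a i) * (MvPolynomial.C (K' b j) * (MvPolynomial.C (K' c l) * delK K l (A i j))))
    rw [hpdB a b c, e2, e3]
    simp only [← Finset.sum_add_distrib]
    refine Finset.sum_eq_zero fun l _ => Finset.sum_eq_zero fun i _ => Finset.sum_eq_zero fun j _ => ?_
    linear_combination (MvPolynomial.C (K' b i) * MvPolynomial.C (K' c j) * MvPolynomial.C (K' a l)) * hA_cocycle l i j
  set D : Fin N → MvPolynomial (Fin N) ℝ := fun c => ∑ a, X a * Tk 2 (B a c) with hDdef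
  have hpD : ∀ b c, pderiv b (D c) = Tk 2 (B b c) + ∑ a, X a * Tk 3 (pderiv b (B a c)) := by
    intro b c
    simp only [hDdef, map_sum, pderiv_mul, pderiv_Tk]
    rw [Finset.sum_add_distrib]
    congr 1
    rw [Finset.sum_eq_single b]
    · rw [pderiv_X_self, one_mul]
    · intro a _ hab
      rw [pderiv_X_of_ne hab, zero_mul]
    · intro h; exact absurd (Finset.mem_univ b) h
  have hpoincare : ∀ b c, pderiv b (D c) - pderiv c (D b) = B b c := by
    intro b c
    rw [hpD b c, hpD c b]
    have h1 : Tk 2 (B c b) = - Tk 2 (B b c) := by rw [hB_anti c b, map_neg]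
    have h2 : ∀ a, X a * Tk 3 (pderiv b (B a c)) - X a * Tk 3 (pderiv c (B a b))
        = X a * Tk 3 (pderiv a (B b c)) := by
      intro a
      rw [← mul_sub, ← map_sub]
      have h3 := hcoc a b c
      rw [hB_anti c a, map_neg] at h3
      have h4 : pderiv b (B a c) - pderiv c (B a b) = pderiv a (B b c) := by
        linear_combination -h3
      rw [h4]
    calc Tk 2 (B b c) + ∑ a, X a * Tk 3 (pderiv b (B a c))
          - (Tk 2 (B c b) + ∑ a, X a * Tk 3 (pderiv c (B a b)))
        = Tk 2 (B b c) + Tk 2 (B b c)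
          + ∑ a, (X a * Tk 3 (pderiv b (B a c)) - X a * Tk 3 (pderiv c (B a b))) := by
          rw [h1, Finset.sum_sub_distrib]; ring
      _ = Tk 2 (B b c) + Tk 2 (B b c) + ∑ a, X a * Tk 3 (pderiv a (B b c)) := by
          rw [Finset.sum_congr rfl fun a _ => h2 a]
      _ = B b c := by
          rw [euler_Tk (B b c), two_smul]; ring
  have hA_fromB : ∀ i j, A i j
      = ∑ b, MvPolynomial.C (K i b) * (∑ c, MvPolynomial.C (K j c) * B b c) := by
    intro i j
    have hinner : ∀ b, ∑ c, MvPolynomial.C (K j c) * B b c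
        = ∑ i', MvPolynomial.C (K' b i') * A i' j := by
      intro b
      calc ∑ c, MvPolynomial.C (K j c) * B b c
          = ∑ c, ∑ i', MvPolynomial.C (K j c) * (MvPolynomial.C (K' b i') * (∑ j', MvPolynomial.C (K' c j') * A i' j')) := by
            simp only [hBdef, Finset.mul_sum]
        _ = ∑ i', ∑ c, MvPolynomial.C (K j c) * (MvPolynomial.C (K' b i') * (∑ j', MvPolynomial.C (K' c j') * A i' j')) :=
            Finset.sum_comm
        _ = ∑ i', MvPolynomial.C (K' b i') * (∑ c, MvPolynomial.C (K j c) * (∑ j', MvPolynomial.C (K' c j') * A i' j')) := by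
            refine Finset.sum_congr rfl fun i' _ => ?_
            rw [Finset.mul_sum]
            exact Finset.sum_congr rfl fun c _ => by ring
        _ = ∑ i', MvPolynomial.C (K' b i') * A i' j := by
            refine Finset.sum_congr rfl fun i' _ => ?_
            rw [contract K K' hKK' j fun j' => A i' j']
    rw [Finset.sum_congr rfl fun b _ => by rw [hinner b]]
    exact (contract K K' hKK' i fun i' => A i' j).symm
  refine ⟨fun k => ∑ c, MvPolynomial.C (K k c) * D c, fun i j => ?_⟩
  have hdel : ∀ (p q : Fin N),
      delK K p (∑ c, MvPolynomial.C (K q c) * D c)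
      = ∑ c, MvPolynomial.C (K q c) * (∑ m, MvPolynomial.C (K p m) * pderiv m (D c)) := by
    intro p q
    rw [hdelK_sum p fun c => MvPolynomial.C (K q c) * D c]
    refine Finset.sum_congr rfl fun c _ => ?_
    rw [hdelK_Cmul p (K q c) (D c)]
    simp only [delK]
  rw [hdel i j, hdel j i]
  calc A i j = ∑ b, MvPolynomial.C (K i b) * (∑ c, MvPolynomial.C (K j c) * B b c) := hA_fromB i j
    _ = ∑ b, ∑ c, MvPolynomial.C (K i b) * (MvPolynomial.C (K j c) * (pderiv b (D c) - pderiv c (D b))) := by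
        refine Finset.sum_congr rfl fun b _ => ?_
        rw [Finset.mul_sum]
        exact Finset.sum_congr rfl fun c _ => by rw [hpoincare b c]
    _ = (∑ b, ∑ c, MvPolynomial.C (K i b) * (MvPolynomial.C (K j c) * pderiv b (D c)))
        - ∑ b, ∑ c, MvPolynomial.C (K i b) * (MvPolynomial.C (K j c) * pderiv c (D b)) := by
        rw [← Finset.sum_sub_distrib]
        refine Finset.sum_congr rfl fun b _ => ?_
        rw [← Finset.sum_sub_distrib]
        exact Finset.sum_congr rfl fun c _ => by ring
    _ = (∑ c, MvPolynomial.C (K j c) * (∑ m, MvPolynomial.C (K i m) * pderiv m (D c)))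
        - ∑ c, MvPolynomial.C (K i c) * (∑ m, MvPolynomial.C (K j m) * pderiv m (D c)) := by
        have g1 : (∑ c, MvPolynomial.C (K j c) * (∑ m, MvPolynomial.C (K i m) * pderiv m (D c)))
            = ∑ b, ∑ c, MvPolynomial.C (K i b) * (MvPolynomial.C (K j c) * pderiv b (D c)) := by
          simp only [Finset.mul_sum]
          rw [Finset.sum_comm]
          exact Finset.sum_congr rfl fun b _ => Finset.sum_congr rfl fun c _ => by ring
        have g2 : (∑ c, MvPolynomial.C (K i c) * (∑ m, MvPolynomial.C (K j m) * pderiv m (D c)))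
            = ∑ b, ∑ c, MvPolynomial.C (K i b) * (MvPolynomial.C (K j c) * pderiv c (D b)) := by
          simp only [Finset.mul_sum]
        rw [g1, g2]
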